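/- A simple graph G contains a ds-completable card if and only if its complement graph Ḡ contains a ds-completable card. -/
import Mathlib


open SimpleGraph Finset
open scoped Classical

variable {V : Type*}

/-- The degree of a vertex `u` in a simple graph `G`. -/
noncomputable def deg (G : SimpleGraph V) (u : V) : ℕ := (G.neighborSet u).ncard

/-- The degree of `u` in the card `G − v` (the vertex-deleted subgraph at `v`). -/
noncomputable def cardDeg (G : SimpleGraph V) (v u : V) : ℕ := (G.neighborSet u \ {v}).ncard

/-- The card `G − v` is ds-completable: for each degree `d`, the vertices of degree `d`
in `G − v` are either all neighbours of `v` in `G` or all non-neighbours of `v` in `G`. -/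
def DsCompletable (G : SimpleGraph V) (v : V) : Prop :=
  ∀ d : ℕ, (∀ u, u ≠ v → cardDeg G v u = d → G.Adj v u) ∨
           (∀ u, u ≠ v → cardDeg G v u = d → ¬ G.Adj v u)

/-- A vertex is bad if the graph contains a vertex of degree one less. -/
def Bad (G : SimpleGraph V) (v : V) : Prop := ∃ w, deg G w + 1 = deg G v

/-- A vertex is dull if the graph contains a vertex of degree one more. -/
def Dull (G : SimpleGraph V) (v : V) : Prop := ∃ w, deg G w = deg G v + 1

/-- ε(s,t): the number of stubs on `s` used by edges from `s` to `t`
(for disjoint `s`, `t` this is the number of edges between them; for `s = t`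
it is twice the number of edges inside `s`). -/
noncomputable def stubs (G : SimpleGraph V) (s t : Finset V) : ℕ :=
  ((s ×ˢ t).filter fun p => G.Adj p.1 p.2).card

/-- A vertex set is neighbourly if no vertex outside the set has a degree one less
than that of a vertex in the set. -/
def Neighbourly (G : SimpleGraph V) (K : Finset V) : Prop :=
  ∀ u ∉ K, ∀ w ∈ K, deg G u + 1 ≠ deg G w

/-- A vertex set is `d`-neighbourly if it contains a vertex `v` of degree `d` such that
no vertex outside the set has a degree one less than that of any member other than `v`. -/
def DNeighbourly (G : SimpleGraph V) (d : ℕ) (K : Finset V) : Prop :=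
  ∃ v ∈ K, deg G v = d ∧ ∀ u ∉ K, ∀ w ∈ K, w ≠ v → deg G u + 1 ≠ deg G w


lemma cardDeg_add_compl [Fintype V] (G : SimpleGraph V) (v u : V) (huv : u ≠ v) :
    cardDeg G v u + cardDeg Gᶜ v u = Fintype.card V - 2 := by
  have hdisj : Disjoint (G.neighborSet u \ {v}) (Gᶜ.neighborSet u \ {v}) := by
    rw [Set.disjoint_left]
    rintro x ⟨hx, -⟩ ⟨hx', -⟩
    exact hx'.2 hx
  have hunion : (G.neighborSet u \ {v}) ∪ (Gᶜ.neighborSet u \ {v}) = ({u, v} : Set V)ᶜ := by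
    ext x
    simp only [Set.mem_union, Set.mem_diff, SimpleGraph.mem_neighborSet, SimpleGraph.compl_adj,
      Set.mem_singleton_iff, Set.mem_compl_iff, Set.mem_insert_iff]
    constructor
    · rintro (⟨h, hv⟩ | ⟨⟨hne, h⟩, hv⟩)
      · exact fun hc => hc.elim (fun e => G.irrefl (e ▸ h)) hv
      · exact fun hc => hc.elim (fun e => hne e.symm) hv
    · intro hc
      push_neg at hc
      by_cases h : G.Adj u x
      · exact Or.inl ⟨h, hc.2⟩
      · exact Or.inr ⟨⟨fun e => hc.1 e.symm, h⟩, hc.2⟩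
  have h1 : (G.neighborSet u \ {v}).ncard + (Gᶜ.neighborSet u \ {v}).ncard
      = (({u, v} : Set V)ᶜ).ncard := by
    rw [← hunion, Set.ncard_union_eq hdisj (Set.toFinite _) (Set.toFinite _)]
  have h2 : (({u, v} : Set V)ᶜ).ncard = Fintype.card V - 2 := by
    have := Set.ncard_add_ncard_compl ({u, v} : Set V) (Set.toFinite _) (Set.toFinite _)
    rw [Set.ncard_pair huv] at this
    rw [Nat.card_eq_fintype_card] at this
    omega
  simpa [cardDeg, h2] using h1

lemma dsCompletable_compl [Fintype V] (G : SimpleGraph V) (v : V)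
    (h : DsCompletable G v) : DsCompletable Gᶜ v := by
  intro d
  have key : ∀ u, u ≠ v → cardDeg Gᶜ v u = d → cardDeg G v u = Fintype.card V - 2 - d := by
    intro u hu hd
    have := cardDeg_add_compl G v u hu
    omega
  rcases h (Fintype.card V - 2 - d) with h' | h'
  · right
    intro u hu hd
    have := h' u hu (key u hu hd)
    simp only [SimpleGraph.compl_adj, not_and, not_not]
    exact fun _ => this
  · left
    intro u hu hd
    exact ⟨fun e => hu e.symm, h' u hu (key u hu hd)⟩

/-- A graph has a ds-completable card iff its complement does. -/
theorem stmt5 [Fintype V] (G : SimpleGraph V) :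
    (∃ v : V, DsCompletable G v) ↔ (∃ v : V, DsCompletable Gᶜ v) := by
  constructor
  · rintro ⟨v, hv⟩
    exact ⟨v, dsCompletable_compl G v hv⟩
  · rintro ⟨v, hv⟩
    refine ⟨v, ?_⟩
    have := dsCompletable_compl Gᶜ v hv
    rwa [compl_compl] at this
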